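/- Let (θ,θ') and (φ,φ') be factor pairs of a set X such that X/θ is equinumerous with X/φ and X/θ' is equinumerous with X/φ'. Then there is a permutation σ of X with σ(θ) = φ and σ(θ') = φ'. Moreover, any two factor pairs (θ,θ') and (θ,θ'') with the same first component satisfy these cardinality conditions, and in that case σ can be chosen so that additionally (x,σ(x)) ∈ θ for every x ∈ X. -/

import Mathlib

/-- A factor pair is a pair of equivalence relations with `θ ∩ θ' = Δ` and `θ ∘ θ' = ∇`. -/
def IsFactorPair {X : Type*} (θ θ' : Setoid X) : Prop :=
  (∀ x y : X, θ x y ∧ θ' x y ↔ x = y) ∧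
  ∀ x y : X, Relation.Comp (⇑θ) (⇑θ') x y

/-- `Fact X`, the set of factor pairs of `X`. -/
def FactPair (X : Type*) : Type _ :=
  {p : Setoid X × Setoid X // IsFactorPair p.1 p.2}

/-- The order on `Fact X`: `(θ,θ') ≤ (φ,φ')` iff `φ ⊆ θ`, `θ' ⊆ φ'` and `φ∘θ' = θ'∘φ`. -/
def FactLE {X : Type*} (p q : FactPair X) : Prop :=
  q.1.1 ≤ p.1.1 ∧ p.1.2 ≤ q.1.2 ∧
    Relation.Comp (⇑q.1.1) (⇑p.1.2) = Relation.Comp (⇑p.1.2) (⇑q.1.1)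

def FactLT {X : Type*} (p q : FactPair X) : Prop :=
  FactLE p q ∧ p ≠ q

/-- The orthocomplementation `(θ,θ')^⊥ = (θ',θ)` on `Fact X`. -/
def FactPerp {X : Type*} (p : FactPair X) : FactPair X :=
  ⟨(p.1.2, p.1.1), by
    obtain ⟨h1, h2⟩ := p.2
    refine ⟨fun x y => ⟨fun h => (h1 x y).1 ⟨h.2, h.1⟩, ?_⟩, fun x y => ?_⟩
    · rintro rfl
      exact ⟨p.1.2.refl' x, p.1.1.refl' x⟩
    · obtain ⟨z, hz1, hz2⟩ := h2 y x
      exact ⟨z, p.1.2.symm' hz2, p.1.1.symm' hz1⟩⟩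

/-- `0 = (∇,Δ)` in `Fact X`. -/
def FactZero (X : Type*) : FactPair X :=
  ⟨(⊤, ⊥), by
    refine ⟨fun x y => ⟨fun h => ?_, ?_⟩, fun x y => ⟨y, ?_, ?_⟩⟩
    · simpa [Setoid.bot_def] using h.2
    · rintro rfl
      exact ⟨(⊤ : Setoid X).refl' x, (⊥ : Setoid X).refl' x⟩
    · simp [Setoid.top_def]
    · simp [Setoid.bot_def]⟩

/-- `1 = (Δ,∇)` in `Fact X`. -/
def FactOne (X : Type*) : FactPair X :=
  ⟨(⊥, ⊤), by
    refine ⟨fun x y => ⟨fun h => ?_, ?_⟩, fun x y => ⟨x, ?_, ?_⟩⟩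
    · simpa [Setoid.bot_def] using h.1
    · rintro rfl
      exact ⟨(⊥ : Setoid X).refl' x, (⊤ : Setoid X).refl' x⟩
    · simp [Setoid.bot_def]
    · simp [Setoid.top_def]⟩

/-- An atom of `Fact X`. -/
def IsFactAtom {X : Type*} (a : FactPair X) : Prop :=
  FactLT (FactZero X) a ∧ ∀ x : FactPair X, FactLT (FactZero X) x → ¬ FactLT x a

/-- An `n`-relation: every equivalence class has exactly `n` elements. -/
def IsNRel {X : Type*} (n : ℕ) (θ : Setoid X) : Prop :=
  ∀ x : X, Nat.card {y // θ x y} = n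

/-- A `p`-atom: an atom `(φ,φ')` such that `φ'` is a `p`-relation. -/
def IsPAtom {X : Type*} (p : ℕ) (a : FactPair X) : Prop :=
  IsFactAtom a ∧ IsNRel p a.1.2

/-- The image `σ(θ) = {(σ x, σ y) : (x,y) ∈ θ}` of an equivalence relation under a
permutation. -/
def permSetoid {X : Type*} (σ : Equiv.Perm X) (θ : Setoid X) : Setoid X :=
  ⟨fun a b => θ (σ.symm a) (σ.symm b),
    ⟨fun a => θ.refl' _, fun h => θ.symm' h, fun h1 h2 => θ.trans' h1 h2⟩⟩

/-- The action `Γ(σ)(θ,θ') = (σ(θ),σ(θ'))` of a permutation on factor pairs. -/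
def permFactPair {X : Type*} (σ : Equiv.Perm X) (t : FactPair X) : FactPair X :=
  ⟨(permSetoid σ t.1.1, permSetoid σ t.1.2), by
    obtain ⟨h1, h2⟩ := t.2
    refine ⟨fun x y => ⟨fun h => ?_, ?_⟩, fun x y => ?_⟩
    · exact σ.symm.injective ((h1 (σ.symm x) (σ.symm y)).1 ⟨h.1, h.2⟩)
    · rintro rfl
      exact ⟨t.1.1.refl' _, t.1.2.refl' _⟩
    · obtain ⟨w, hw1, hw2⟩ := h2 (σ.symm x) (σ.symm y)
      refine ⟨σ w, ?_, ?_⟩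
      · show t.1.1 (σ.symm x) (σ.symm (σ w))
        simpa using hw1
      · show t.1.2 (σ.symm (σ w)) (σ.symm y)
        simpa using hw2⟩

/-- An automorphism of `Fact X`: a bijection preserving `≤` in both directions and
commuting with `⊥`. -/
def IsFactAut {X : Type*} (α : FactPair X → FactPair X) : Prop :=
  Function.Bijective α ∧
  (∀ p q : FactPair X, FactLE p q ↔ FactLE (α p) (α q)) ∧
  ∀ p : FactPair X, α (FactPerp p) = FactPerp (α p)

/-- `Eq*(X)`: the equivalence relations on `X` that are `n`-relations for some `n ≥ 1`. -/
def EqStar (X : Type*) : Type _ :=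
  {θ : Setoid X // ∃ n : ℕ, 0 < n ∧ IsNRel n θ}

/-- A regular equivalence relation: any two classes are equinumerous. -/
def IsRegularRel {X : Type*} (θ : Setoid X) : Prop :=
  ∀ x y : X, Nonempty ({z // θ x z} ≃ {z // θ y z})

/-- The action of a permutation on `Eq*(X)`. -/
def permEqStar {X : Type*} (σ : Equiv.Perm X) (θ : EqStar X) : EqStar X :=
  ⟨permSetoid σ θ.1, by
    obtain ⟨n, hn, hrel⟩ := θ.2
    refine ⟨n, hn, fun x => ?_⟩
    have e : {y // (permSetoid σ θ.1) x y} ≃ {y // θ.1 (σ.symm x) y} :=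
      σ.symm.subtypeEquiv fun y => Iff.rfl
    rw [Nat.card_congr e]
    exact hrel (σ.symm x)⟩

/-- The canonical bijection `X ≃ X/θ × X/θ'` from a factor pair. -/
noncomputable def factorEquiv {X : Type*} {θ θ' : Setoid X} (h : IsFactorPair θ θ') :
    X ≃ Quotient θ × Quotient θ' :=
  Equiv.ofBijective (fun x => (Quotient.mk θ x, Quotient.mk θ' x)) (by
    constructor
    · intro a b hab
      have h1 : θ a b := Quotient.exact (congrArg Prod.fst hab)
      have h2 : θ' a b := Quotient.exact (congrArg Prod.snd hab)
      exact (h.1 a b).1 ⟨h1, h2⟩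
    · rintro ⟨a, b⟩
      induction a using Quotient.inductionOn with
      | h x =>
        induction b using Quotient.inductionOn with
        | h y =>
          obtain ⟨z, hz1, hz2⟩ := h.2 x y
          exact ⟨z, by
            simp only [Prod.mk.injEq]
            exact ⟨Quotient.sound (θ.symm' hz1), Quotient.sound hz2⟩⟩)

theorem factorEquiv_fst {X : Type*} {θ θ' : Setoid X} (h : IsFactorPair θ θ') (a b : X) :
    θ a b ↔ (factorEquiv h a).1 = (factorEquiv h b).1 := by
  show θ a b ↔ Quotient.mk θ a = Quotient.mk θ b
  exact ⟨Quotient.sound, Quotient.exact⟩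

theorem factorEquiv_snd {X : Type*} {θ θ' : Setoid X} (h : IsFactorPair θ θ') (a b : X) :
    θ' a b ↔ (factorEquiv h a).2 = (factorEquiv h b).2 := by
  show θ' a b ↔ Quotient.mk θ' a = Quotient.mk θ' b
  exact ⟨Quotient.sound, Quotient.exact⟩

/-- For a factor pair `(θ,θ')` and a point `x₀`, the `θ`-class of `x₀` is a transversal
of `θ'`. -/
noncomputable def classEquivQuotient {X : Type*} {θ θ' : Setoid X} (h : IsFactorPair θ θ')
    (x₀ : X) : {z // θ x₀ z} ≃ Quotient θ' :=
  Equiv.ofBijective (fun z => Quotient.mk θ' z.1) (by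
    constructor
    · rintro ⟨a, ha⟩ ⟨b, hb⟩ hab
      have h2 : θ' a b := Quotient.exact hab
      have h1 : θ a b := θ.trans' (θ.symm' ha) hb
      exact Subtype.ext ((h.1 a b).1 ⟨h1, h2⟩)
    · intro b
      induction b using Quotient.inductionOn with
      | h y =>
        obtain ⟨z, hz1, hz2⟩ := h.2 x₀ y
        exact ⟨⟨z, hz1⟩, Quotient.sound hz2⟩)

/-- Transitivity: if `(θ,θ')` and `(φ,φ')` are factor pairs of `X` with `X/θ ≃ X/φ` and
`X/θ' ≃ X/φ'`, then some permutation `σ` of `X` satisfies `σ(θ) = φ` and `σ(θ') = φ'`.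
Moreover any two factor pairs `(θ,θ')`, `(θ,θ'')` with the same first component satisfy
these cardinality conditions, and then `σ` may be chosen with `(x,σ(x)) ∈ θ` for all
`x`. -/
theorem factPair_transitivity (X : Type*) :
    (∀ (θ θ' φ φ' : Setoid X), IsFactorPair θ θ' → IsFactorPair φ φ' →
      Nonempty (Quotient θ ≃ Quotient φ) → Nonempty (Quotient θ' ≃ Quotient φ') →
      ∃ σ : Equiv.Perm X, permSetoid σ θ = φ ∧ permSetoid σ θ' = φ') ∧
    (∀ (θ θ' θ'' : Setoid X), IsFactorPair θ θ' → IsFactorPair θ θ'' →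
      (Nonempty (Quotient θ ≃ Quotient θ) ∧ Nonempty (Quotient θ' ≃ Quotient θ'')) ∧
      ∃ σ : Equiv.Perm X, permSetoid σ θ = θ ∧ permSetoid σ θ' = θ'' ∧
        ∀ x : X, θ x (σ x)) := by
  have main : ∀ (θ θ' φ φ' : Setoid X) (h1 : IsFactorPair θ θ') (h2 : IsFactorPair φ φ')
      (f : Quotient θ ≃ Quotient φ) (g : Quotient θ' ≃ Quotient φ'),
      ∃ σ : Equiv.Perm X, permSetoid σ θ = φ ∧ permSetoid σ θ' = φ' ∧
        ∀ x, σ x = (factorEquiv h2).symm (f ((factorEquiv h1 x).1), g ((factorEquiv h1 x).2)) := by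
    intro θ θ' φ φ' h1 h2 f g
    set e1 := factorEquiv h1
    set e2 := factorEquiv h2
    refine ⟨(e1.trans (f.prodCongr g)).trans e2.symm, ?_, ?_, fun x => rfl⟩
    · ext x y
      show θ (e1.symm ((f.prodCongr g).symm (e2 x))) (e1.symm ((f.prodCongr g).symm (e2 y))) ↔ φ x y
      rw [factorEquiv_fst h1, factorEquiv_fst h2]
      simp [e1, e2, Equiv.prodCongr_symm, Equiv.prodCongr_apply]
    · ext x y
      show θ' (e1.symm ((f.prodCongr g).symm (e2 x))) (e1.symm ((f.prodCongr g).symm (e2 y))) ↔ φ' x y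
      rw [factorEquiv_snd h1, factorEquiv_snd h2]
      simp [e1, e2, Equiv.prodCongr_symm, Equiv.prodCongr_apply]
  constructor
  · rintro θ θ' φ φ' h1 h2 ⟨f⟩ ⟨g⟩
    obtain ⟨σ, hσ1, hσ2, _⟩ := main θ θ' φ φ' h1 h2 f g
    exact ⟨σ, hσ1, hσ2⟩
  · intro θ θ' θ'' h1 h2
    have hg : Nonempty (Quotient θ' ≃ Quotient θ'') := by
      rcases isEmpty_or_nonempty X with hX | ⟨⟨x₀⟩⟩
      · haveI : IsEmpty (Quotient θ') := Function.Surjective.isEmpty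
          (Quotient.mk''_surjective (s₁ := θ'))
        haveI : IsEmpty (Quotient θ'') := Function.Surjective.isEmpty
          (Quotient.mk''_surjective (s₁ := θ''))
        exact ⟨Equiv.equivOfIsEmpty _ _⟩
      · exact ⟨(classEquivQuotient h1 x₀).symm.trans (classEquivQuotient h2 x₀)⟩
    obtain ⟨g⟩ := hg
    obtain ⟨σ, hσ1, hσ2, hform⟩ := main θ θ' θ θ'' h1 h2 (Equiv.refl _) g
    refine ⟨⟨⟨Equiv.refl _⟩, ⟨g⟩⟩, σ, hσ1, hσ2, fun x => ?_⟩
    rw [factorEquiv_fst h2 x (σ x)]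
    rw [hform]
    show Quotient.mk θ x = (factorEquiv h2 ((factorEquiv h2).symm _)).1
    rw [Equiv.apply_symm_apply]
    rfl
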